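/- (Davis' Prime Avoidance) Let β be an ideal of a commutative ring A, let p₁,...,p_n be finitely many prime ideals of A, and let f ∈ A. If ⟨f⟩ + β ⊄ p_i for all i, then there exists g ∈ β such that f + g ∉ p₁ ∪ ... ∪ p_n. -/

import Mathlib

lemma davis_aux {A : Type*} [CommRing A] (β : Ideal A) (f : A) :
    ∀ S : Finset (Ideal A), (∀ q ∈ S, q.IsPrime) →
      (∀ q ∈ S, ¬ (Ideal.span {f} + β ≤ q)) →
      ∃ g ∈ β, ∀ q ∈ S, f + g ∉ q := by
  classical
  intro S
  induction S using Finset.strongInduction with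
  | _ S IH =>
    intro hprime hns
    rcases S.eq_empty_or_nonempty with rfl | hne
    · exact ⟨0, β.zero_mem, by simp⟩
    obtain ⟨q₀, hq₀S, hmin⟩ := S.exists_minimal hne
    set S' := S.erase q₀ with hS'
    obtain ⟨g', hg'β, hg'⟩ := IH S' (Finset.erase_ssubset hq₀S)
      (fun q hq => hprime q (Finset.mem_of_mem_erase hq))
      (fun q hq => hns q (Finset.mem_of_mem_erase hq))
    by_cases hfg : f + g' ∉ q₀
    · refine ⟨g', hg'β, fun q hq => ?_⟩
      by_cases hqq : q = q₀
      · exact hqq ▸ hfg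
      · exact hg' q (Finset.mem_erase.mpr ⟨hqq, hq⟩)
    push_neg at hfg
    -- f + g' ∈ q₀, so β ⊄ q₀
    have hβ : ¬ β ≤ q₀ := by
      intro hβ
      apply hns q₀ hq₀S
      rw [Submodule.add_eq_sup, sup_le_iff]
      constructor
      · rw [Ideal.span_singleton_le_iff_mem]
        have : f = (f + g') - g' := by ring
        rw [this]
        exact q₀.sub_mem hfg (hβ hg'β)
      · exact hβ
    obtain ⟨b, hbβ, hbq₀⟩ := Set.not_subset.mp hβ
    -- for each q in S', pick c_q ∈ q \ q₀
    have hc : ∀ q ∈ S', ∃ c, c ∈ q ∧ c ∉ q₀ := by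
      intro q hq
      obtain ⟨hqne, hqS⟩ := Finset.mem_erase.mp hq
      by_contra hcon
      push_neg at hcon
      have hle : q ≤ q₀ := fun x hx => hcon x hx
      exact hqne (le_antisymm hle (hmin hqS hle))
    choose c hcq hcq₀ using hc
    set cprod := ∏ q ∈ S'.attach, c q (q.2) with hcprod
    have hcmem : ∀ q ∈ S', cprod ∈ q := by
      intro q hq
      rw [hcprod, ← Finset.prod_erase_mul _ _ (Finset.mem_attach S' ⟨q, hq⟩)]
      exact Ideal.mul_mem_left _ _ (hcq q hq)
    have hcnot : cprod ∉ q₀ := by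
      have := hprime q₀ hq₀S
      rw [hcprod, Ideal.IsPrime.prod_mem_iff]
      push_neg
      exact fun q _ => hcq₀ q q.2
    refine ⟨g' + b * cprod, β.add_mem hg'β (Ideal.mul_mem_right _ _ hbβ), fun q hq => ?_⟩
    by_cases hqq : q = q₀
    · subst hqq
      intro hmem
      have : b * cprod ∈ q := by
        have : b * cprod = (f + (g' + b * cprod)) - (f + g') := by ring
        rw [this]; exact q.sub_mem hmem hfg
      rcases (hprime q hq₀S).mem_or_mem this with h1 | h1
      · exact hbq₀ h1
      · exact hcnot h1
    · intro hmem
      have hqS' : q ∈ S' := Finset.mem_erase.mpr ⟨hqq, hq⟩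
      apply hg' q hqS'
      have : f + g' = (f + (g' + b * cprod)) - b * cprod := by ring
      rw [this]
      exact q.sub_mem hmem (Ideal.mul_mem_left _ _ (hcmem q hqS'))

/-- Davis' Prime Avoidance Lemma. -/
theorem davis_prime_avoidance {A : Type*} [CommRing A] (β : Ideal A) (n : ℕ)
    (p : Fin n → Ideal A) (hp : ∀ i, (p i).IsPrime) (f : A)
    (h : ∀ i, ¬ (Ideal.span {f} + β ≤ p i)) :
    ∃ g ∈ β, ∀ i, f + g ∉ p i := by
  classical
  obtain ⟨g, hgβ, hg⟩ := davis_aux β f (Finset.image p Finset.univ)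
    (fun q hq => by obtain ⟨i, _, rfl⟩ := Finset.mem_image.mp hq; exact hp i)
    (fun q hq => by obtain ⟨i, _, rfl⟩ := Finset.mem_image.mp hq; exact h i)
  exact ⟨g, hgβ, fun i => hg (p i) (Finset.mem_image_of_mem p (Finset.mem_univ i))⟩
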